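/- Let (α_k)_{k∈ℕ} be a sequence of independent standard Gaussian random variables on a probability space, let (β_k)_{k∈ℕ} be real numbers with ∑_k |β_k| < ∞, and let γ > 0 satisfy 8γ β_k < 1 for every k. Then E[exp(2γ ∑_k β_k α_k²)] = exp(−(1/2) ∑_k log(1 − 4γβ_k)) ≤ exp(2γ ∑_k β_k + 8γ² ∑_k β_k²). -/

import Mathlib

open MeasureTheory ProbabilityTheory Filter
open scoped ENNReal NNReal

open Real in
lemma gauss_sq_int {b : ℝ} (hb : b < 1/2) :
    Integrable (fun x => Real.exp (b * x^2)) (gaussianReal 0 1) ∧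
    ∫ x, Real.exp (b * x^2) ∂(gaussianReal 0 1)
      = Real.exp (-(1/2) * Real.log (1 - 2*b)) := by
  have h12 : (0:ℝ) < 1/2 - b := by linarith
  have h2b : (0:ℝ) < 1 - 2*b := by linarith
  have hpdf : ∀ x : ℝ, gaussianPDFReal 0 1 x = (Real.sqrt (2*π))⁻¹ * Real.exp (-(x^2/2)) := by
    intro x
    simp [gaussianPDFReal, neg_div]
  have hmap : gaussianReal 0 1 = volume.withDensity (fun x => ((gaussianPDFReal 0 1 x).toNNReal : ℝ≥0∞)) := by
    rw [gaussianReal_of_var_ne_zero 0 one_ne_zero]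
    rfl
  have hfm : Measurable fun x => (gaussianPDFReal 0 1 x).toNNReal :=
    (measurable_gaussianPDFReal 0 1).real_toNNReal
  have hcomb : ∀ x : ℝ, (gaussianPDFReal 0 1 x).toNNReal • Real.exp (b * x^2)
      = (Real.sqrt (2*π))⁻¹ * Real.exp (-(1/2 - b) * x^2) := by
    intro x
    rw [NNReal.smul_def, Real.coe_toNNReal _ (gaussianPDFReal_nonneg 0 1 x), hpdf, smul_eq_mul,
      mul_assoc, ← Real.exp_add]
    ring_nf
  have hint : Integrable (fun x => (gaussianPDFReal 0 1 x).toNNReal • Real.exp (b * x^2)) volume := by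
    simp only [hcomb]
    exact (integrable_exp_neg_mul_sq h12).const_mul _
  constructor
  · rw [hmap]
    exact (integrable_withDensity_iff_integrable_smul hfm).2 hint
  · rw [hmap, integral_withDensity_eq_integral_smul hfm]
    simp only [hcomb]
    rw [integral_const_mul, integral_gaussian]
    rw [show -(1/2) * Real.log (1 - 2*b) = Real.log (1-2*b) * (-(1/2)) by ring,
      Real.exp_mul, Real.exp_log h2b, Real.rpow_neg h2b.le, ← Real.sqrt_eq_rpow,
      ← Real.sqrt_inv, ← Real.sqrt_inv, ← Real.sqrt_mul (by positivity : (0:ℝ) ≤ (2*π)⁻¹)]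
    congr 1
    have hπ : π ≠ 0 := Real.pi_ne_zero
    have h1 : (2*π) ≠ 0 := by positivity
    have h2 : (1/2 - b) ≠ 0 := ne_of_gt h12
    have h3 : (1 - 2*b) ≠ 0 := ne_of_gt h2b
    field_simp

lemma log_one_sub_ge {x : ℝ} (hx : x < 1/2) : -(x + x^2) ≤ Real.log (1 - x) := by
  have h1 : (0:ℝ) < 1 - x := by linarith
  have key : 1 ≤ (1 - x) * Real.exp (x + x^2) := by
    rcases le_or_gt x 0 with h0 | h0
    · nlinarith [Real.add_one_le_exp (x + x^2)]
    · nlinarith [Real.quadratic_le_exp_of_nonneg (show (0:ℝ) ≤ x + x^2 by positivity)]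
  have h2 : Real.exp (-(x + x^2)) ≤ 1 - x := by
    rw [Real.exp_neg, inv_le_iff_one_le_mul₀ (Real.exp_pos _)]
    linarith [key]
  calc -(x + x^2) = Real.log (Real.exp (-(x+x^2))) := (Real.log_exp _).symm
    _ ≤ Real.log (1 - x) := Real.log_le_log (Real.exp_pos _) h2

lemma abs_log_one_sub_le {x : ℝ} (hx : x < 1/2) : |Real.log (1 - x)| ≤ 2 * |x| := by
  rcases le_or_gt 0 x with h0 | h0
  · have h1 := log_one_sub_ge hx
    have h2 : Real.log (1 - x) ≤ 0 := Real.log_nonpos (by linarith) (by linarith)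
    rw [abs_of_nonneg h0, abs_le]
    constructor <;> nlinarith
  · have h1 : 0 ≤ Real.log (1 - x) := Real.log_nonneg (by linarith)
    have h2 : Real.log (1 - x) ≤ (1 - x) - 1 := Real.log_le_sub_one_of_pos (by linarith)
    rw [abs_of_nonneg h1, abs_of_neg h0]
    linarith

/-- Let `(α k)` be independent standard Gaussian random variables, `(β k)` real numbers
with `∑ |β k| < ∞`, and `γ > 0` with `8γ β_k < 1` for all `k`. Then, for
`S = ∑ β k (α k)²` (the a.s. limit of the partial sums),
`E[exp(2γS)] = exp(-(1/2) ∑ log(1 - 4γβ_k)) ≤ exp(2γ ∑ β_k + 8γ² ∑ β_k²)`. -/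
theorem stmt_14 {Ω : Type*} [MeasureSpace Ω] [IsProbabilityMeasure (ℙ : Measure Ω)]
    (α : ℕ → Ω → ℝ) (hmeas : ∀ k, Measurable (α k))
    (hindep : iIndepFun α ℙ)
    (hgauss : ∀ k, Measure.map (α k) ℙ = gaussianReal 0 1)
    (β : ℕ → ℝ) (hβ : Summable fun k => |β k|)
    (γ : ℝ) (hγ : 0 < γ) (hγβ : ∀ k, 8 * γ * β k < 1)
    (S : Ω → ℝ)
    (hS : ∀ᵐ ω ∂ℙ, Tendsto (fun n => ∑ k ∈ Finset.range n, β k * (α k ω) ^ 2)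
      atTop (nhds (S ω))) :
    (∫ ω, Real.exp (2 * γ * S ω) ∂ℙ)
        = Real.exp (-(1 / 2) * ∑' k, Real.log (1 - 4 * γ * β k)) ∧
    (∫ ω, Real.exp (2 * γ * S ω) ∂ℙ)
        ≤ Real.exp (2 * γ * (∑' k, β k) + 8 * γ ^ 2 * ∑' k, (β k) ^ 2) := by
  -- single-coordinate integrals
  have hone : ∀ (c : ℝ), c < 1/2 → ∀ k,
      Integrable (fun ω => Real.exp (c * (α k ω)^2)) ℙ ∧
      ∫ ω, Real.exp (c * (α k ω)^2) ∂ℙ = Real.exp (-(1/2) * Real.log (1 - 2*c)) := by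
    intro c hc k
    have h := gauss_sq_int hc
    rw [← hgauss k] at h
    refine ⟨(integrable_map_measure h.1.aestronglyMeasurable (hmeas k).aemeasurable).1 h.1, ?_⟩
    rw [← integral_map (hmeas k).aemeasurable h.1.aestronglyMeasurable]
    exact h.2
  -- independence of the transformed sequences
  have hXind : ∀ (c : ℕ → ℝ),
      iIndepFun (fun k ω => c k * (α k ω)^2) ℙ := by
    intro c
    exact hindep.comp (fun k x => c k * x^2) (fun k => by fun_prop)
  have hXmeas : ∀ (c : ℕ → ℝ) k, Measurable (fun ω => c k * (α k ω)^2) :=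
    fun c k => ((hmeas k).pow_const 2).const_mul _
  -- the finite-stage product formula, for arbitrary coefficients c with 8γ c k < 1
  have hkey : ∀ (c : ℕ → ℝ), (∀ k, 8 * γ * c k < 1) → ∀ n,
      ∫ ω, Real.exp (2*γ * ∑ k ∈ Finset.range n, c k * (α k ω)^2) ∂ℙ
        = Real.exp (∑ k ∈ Finset.range n, -(1/2) * Real.log (1 - 4*γ*c k)) := by
    intro c hc n
    have hmg := (hXind c).mgf_sum (hXmeas c) (Finset.range n) (t := 2*γ)
    have h1 : ∀ k, mgf (fun ω => c k * (α k ω)^2) ℙ (2*γ)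
        = Real.exp (-(1/2) * Real.log (1 - 4*γ*c k)) := by
      intro k
      have hck : 2*γ*c k < 1/2 := by have := hc k; nlinarith
      have := (hone (2*γ*c k) hck k).2
      simp only [mgf]
      rw [show (fun ω => Real.exp (2*γ * (c k * (α k ω)^2))) = fun ω => Real.exp ((2*γ*c k) * (α k ω)^2) by
        funext ω; ring_nf]
      rw [this]
      norm_num
      ring_nf
    calc ∫ ω, Real.exp (2*γ * ∑ k ∈ Finset.range n, c k * (α k ω)^2) ∂ℙ
        = mgf (∑ k ∈ Finset.range n, fun ω => c k * (α k ω)^2) ℙ (2*γ) := by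
          simp only [mgf, Finset.sum_apply]
      _ = ∏ k ∈ Finset.range n, mgf (fun ω => c k * (α k ω)^2) ℙ (2*γ) := hmg
      _ = ∏ k ∈ Finset.range n, Real.exp (-(1/2) * Real.log (1 - 4*γ*c k)) :=
          Finset.prod_congr rfl fun k _ => h1 k
      _ = Real.exp (∑ k ∈ Finset.range n, -(1/2) * Real.log (1 - 4*γ*c k)) :=
          (Real.exp_sum _ _).symm
  -- positive-part coefficients
  set cp : ℕ → ℝ := fun k => max (β k) 0 with hcp
  have hcp0 : ∀ k, 0 ≤ cp k := fun k => le_max_right _ _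
  have hcpabs : ∀ k, cp k ≤ |β k| := fun k => max_le (le_abs_self _) (abs_nonneg _)
  have hβplus : ∀ k, 8 * γ * cp k < 1 := by
    intro k
    rcases le_or_gt (β k) 0 with h | h
    · simp only [hcp, max_eq_right h]; linarith
    · simp only [hcp, max_eq_left h.le]; exact hγβ k
  -- partial product dominating functions
  have hterm_le : ∀ k, -(1/2) * Real.log (1 - 4*γ*cp k) ≤ 4*γ*|β k| := by
    intro k
    have hx0 : 0 ≤ 4*γ*cp k := by have := hcp0 k; positivity
    have hx2 : 4*γ*cp k < 1/2 := by have := hβplus k; linarith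
    have hlog := log_one_sub_ge hx2
    have hxb : 4*γ*cp k ≤ 4*γ*|β k| := by have := hcpabs k; nlinarith
    nlinarith [sq_nonneg (4*γ*cp k)]
  have hHn_le : ∀ n, ∫ ω, Real.exp (2*γ * ∑ k ∈ Finset.range n, cp k * (α k ω)^2) ∂ℙ
      ≤ Real.exp (4*γ * ∑' k, |β k|) := by
    intro n
    rw [hkey cp hβplus n]
    apply Real.exp_le_exp.2
    calc ∑ k ∈ Finset.range n, -(1/2) * Real.log (1 - 4*γ*cp k)
        ≤ ∑ k ∈ Finset.range n, 4*γ*|β k| := Finset.sum_le_sum fun k _ => hterm_le k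
      _ ≤ 4*γ * ∑' k, |β k| := by
          rw [← Finset.mul_sum, show (4:ℝ)*γ*∑' k, |β k| = 4*γ * ∑' k, |β k| from rfl]
          have : ∑ k ∈ Finset.range n, |β k| ≤ ∑' k, |β k| :=
            Summable.sum_le_tsum _ (fun _ _ => abs_nonneg _) hβ
          nlinarith
  -- integrability of the dominating partial products
  have hint_plus : ∀ n, Integrable
      (fun ω => Real.exp (2*γ * ∑ k ∈ Finset.range n, cp k * (α k ω)^2)) ℙ := by
    intro n
    have h := (hXind cp).integrable_exp_mul_sum (hXmeas cp) (t := 2*γ)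
      (s := Finset.range n) (fun k _ => by
        have hck : 2*γ*cp k < 1/2 := by have := hβplus k; nlinarith
        have h2 := (hone (2*γ*cp k) hck k).1
        exact h2.congr (Filter.Eventually.of_forall fun ω => by simp only []; ring_nf))
    simpa only [Finset.sum_apply] using h
  -- ennreal dominating function
  set GE : Ω → ℝ≥0∞ := fun ω =>
    ⨆ n, ENNReal.ofReal (Real.exp (2*γ * ∑ k ∈ Finset.range n, cp k * (α k ω)^2)) with hGE
  have hGn_meas : ∀ n, Measurable (fun ω =>
      ENNReal.ofReal (Real.exp (2*γ * ∑ k ∈ Finset.range n, cp k * (α k ω)^2))) := by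
    intro n
    apply Measurable.ennreal_ofReal
    apply Real.measurable_exp.comp
    apply Measurable.const_mul
    exact Finset.measurable_sum _ fun k _ => (hXmeas cp k)
  have hGE_meas : Measurable GE := Measurable.iSup hGn_meas
  have hGn_mono : ∀ ω, Monotone (fun n =>
      ENNReal.ofReal (Real.exp (2*γ * ∑ k ∈ Finset.range n, cp k * (α k ω)^2))) := by
    intro ω m n hmn
    apply ENNReal.ofReal_le_ofReal
    apply Real.exp_le_exp.2
    apply mul_le_mul_of_nonneg_left _ (by linarith : (0:ℝ) ≤ 2*γ)
    apply Finset.sum_le_sum_of_subset_of_nonneg (Finset.range_subset_range.2 hmn)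
    intro k _ _
    have := hcp0 k
    positivity
  have hGE_fin : ∫⁻ ω, GE ω ∂ℙ ≤ ENNReal.ofReal (Real.exp (4*γ * ∑' k, |β k|)) := by
    rw [hGE, lintegral_iSup hGn_meas (fun m n h => fun ω => hGn_mono ω h)]
    apply iSup_le
    intro n
    rw [← ofReal_integral_eq_lintegral_ofReal (hint_plus n)
      (Filter.Eventually.of_forall fun ω => (Real.exp_pos _).le)]
    exact ENNReal.ofReal_le_ofReal (hHn_le n)
  have hGE_lt_top : ∫⁻ ω, GE ω ∂ℙ < ⊤ := lt_of_le_of_lt hGE_fin ENNReal.ofReal_lt_top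
  have hGE_ae : ∀ᵐ ω ∂ℙ, GE ω < ⊤ := ae_lt_top hGE_meas hGE_lt_top.ne
  -- the real dominating function
  set bound : Ω → ℝ := fun ω => (GE ω).toReal with hbound
  have hbound_int : Integrable bound ℙ := by
    refine ⟨(hGE_meas.ennreal_toReal).aestronglyMeasurable, ?_⟩
    rw [hasFiniteIntegral_iff_norm]
    calc ∫⁻ ω, ENNReal.ofReal ‖bound ω‖ ∂ℙ ≤ ∫⁻ ω, GE ω ∂ℙ := by
          apply lintegral_mono
          intro ω
          simp only [hbound, Real.norm_eq_abs, abs_of_nonneg ENNReal.toReal_nonneg]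
          exact ENNReal.ofReal_toReal_le
      _ < ⊤ := hGE_lt_top
  -- domination
  have h_bound : ∀ n, ∀ᵐ ω ∂ℙ,
      ‖Real.exp (2*γ * ∑ k ∈ Finset.range n, β k * (α k ω)^2)‖ ≤ bound ω := by
    intro n
    filter_upwards [hGE_ae] with ω hω
    rw [Real.norm_eq_abs, abs_of_pos (Real.exp_pos _)]
    have h1 : Real.exp (2*γ * ∑ k ∈ Finset.range n, β k * (α k ω)^2)
        ≤ Real.exp (2*γ * ∑ k ∈ Finset.range n, cp k * (α k ω)^2) := by
      apply Real.exp_le_exp.2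
      apply mul_le_mul_of_nonneg_left _ (by linarith : (0:ℝ) ≤ 2*γ)
      apply Finset.sum_le_sum
      intro k _
      have h2 : β k ≤ cp k := le_max_left _ _
      nlinarith [sq_nonneg (α k ω)]
    refine h1.trans ?_
    have h3 : ENNReal.ofReal (Real.exp (2*γ * ∑ k ∈ Finset.range n, cp k * (α k ω)^2))
        ≤ GE ω := le_iSup (fun n => ENNReal.ofReal (Real.exp (2*γ * ∑ k ∈ Finset.range n, cp k * (α k ω)^2))) n
    have h4 := ENNReal.toReal_mono hω.ne h3
    rwa [ENNReal.toReal_ofReal (Real.exp_pos _).le] at h4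
  -- a.e. convergence of the exponentials
  have h_lim : ∀ᵐ ω ∂ℙ, Tendsto
      (fun n => Real.exp (2*γ * ∑ k ∈ Finset.range n, β k * (α k ω)^2)) atTop
      (nhds (Real.exp (2*γ * S ω))) := by
    filter_upwards [hS] with ω hω
    exact (Real.continuous_exp.tendsto _).comp (hω.const_mul (2*γ))
  -- measurability of the approximants
  have hFmeas : ∀ n, AEStronglyMeasurable
      (fun ω => Real.exp (2*γ * ∑ k ∈ Finset.range n, β k * (α k ω)^2)) ℙ := fun n =>
    (Real.measurable_exp.comp ((Finset.measurable_sum _ fun k _ => hXmeas β k).const_mul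
      (2*γ))).aestronglyMeasurable
  -- dominated convergence
  have hDCT := tendsto_integral_of_dominated_convergence bound hFmeas hbound_int h_bound h_lim
  -- summability of the logarithms
  have hx_lt : ∀ k, 4*γ*β k < 1/2 := fun k => by have := hγβ k; linarith
  have hlog_sum : Summable (fun k => Real.log (1 - 4*γ*β k)) := by
    apply Summable.of_abs
    apply Summable.of_nonneg_of_le (fun k => abs_nonneg _) (fun k => ?_) (hβ.mul_left (8*γ))
    calc |Real.log (1 - 4*γ*β k)| ≤ 2 * |4*γ*β k| := abs_log_one_sub_le (hx_lt k)
      _ = 8*γ*|β k| := by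
          rw [abs_mul, abs_of_pos (by positivity : (0:ℝ) < 4*γ)]; ring
  -- convergence of partial sums
  have htend : Tendsto (fun n => ∑ k ∈ Finset.range n, -(1/2) * Real.log (1 - 4*γ*β k))
      atTop (nhds (-(1/2) * ∑' k, Real.log (1 - 4*γ*β k))) := by
    have h2 := hlog_sum.hasSum.tendsto_sum_nat.const_mul (-(1/2):ℝ)
    simpa only [Finset.mul_sum] using h2
  have hglue : Tendsto (fun n => ∫ ω, Real.exp (2*γ * ∑ k ∈ Finset.range n, β k * (α k ω)^2) ∂ℙ)
      atTop (nhds (Real.exp (-(1/2) * ∑' k, Real.log (1 - 4*γ*β k)))) := by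
    rw [funext (hkey β hγβ)]
    exact (Real.continuous_exp.tendsto _).comp htend
  have hmain : ∫ ω, Real.exp (2*γ * S ω) ∂ℙ
      = Real.exp (-(1/2) * ∑' k, Real.log (1 - 4*γ*β k)) := tendsto_nhds_unique hDCT hglue
  have hmain' : ∫ ω, Real.exp (2 * γ * S ω) ∂ℙ
      = Real.exp (-(1 / 2) * ∑' k, Real.log (1 - 4 * γ * β k)) := hmain
  refine ⟨hmain', ?_⟩
  rw [hmain']
  apply Real.exp_le_exp.2
  have hβ' : Summable β := hβ.of_abs
  have hβsq : Summable (fun k => (β k)^2) := by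
    apply Summable.of_nonneg_of_le (fun k => sq_nonneg _) (fun k => ?_)
      (hβ.mul_left (∑' j, |β j|))
    have hk : |β k| ≤ ∑' j, |β j| := Summable.le_tsum hβ k (fun _ _ => abs_nonneg _)
    nlinarith [abs_nonneg (β k), sq_abs (β k), abs_mul_abs_self (β k)]
  rw [← tsum_mul_left, ← tsum_mul_left, ← tsum_mul_left,
    ← Summable.tsum_add (hβ'.mul_left (2*γ)) (hβsq.mul_left (8*γ^2))]
  apply Summable.tsum_le_tsum (fun k => ?_) (hlog_sum.mul_left _)
    ((hβ'.mul_left (2*γ)).add (hβsq.mul_left (8*γ^2)))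
  nlinarith [log_one_sub_ge (hx_lt k)]
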